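/- arXiv:2206.04206 — 4 statements merged into one kernel-verified Lean document; each statement's English description precedes it below -/
import Mathlib

section
/- Let u, v ∈ ℝ^e and let λ ∈ ℝ satisfy min_i(v_i − u_i) ≤ λ ≤ max_i(v_i − u_i). Define z ∈ ℝ^e by z_i = max(λ + u_i, v_i) for each i (so z = λ ⊙ u ⊞ v is a point of the tropical line segment between u and v). Then d_tr(u,z) + d_tr(z,v) = d_tr(u,v); that is, the tropical line segment is a geodesic for the tropical metric. -/
/-- The tropical distance (generalized Hilbert projective metric) on `ℝ^e`:
`d_tr(v,w) = max_i (v_i - w_i) - min_i (v_i - w_i)`. -/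
noncomputable def dtr {e : ℕ} (he : 0 < e) (v w : Fin e → ℝ) : ℝ :=
  (Finset.univ.sup' ⟨⟨0, he⟩, Finset.mem_univ _⟩ fun i => v i - w i) -
  (Finset.univ.inf' ⟨⟨0, he⟩, Finset.mem_univ _⟩ fun i => v i - w i)

/-- for `λ` between `min_i(v_i - u_i)` and `max_i(v_i - u_i)`,
the point `z = λ ⊙ u ⊞ v` of the tropical line segment between `u` and `v`
satisfies `d_tr(u,z) + d_tr(z,v) = d_tr(u,v)`; that is, the tropical line
segment is a geodesic for the tropical metric. -/
theorem tropical_segment_is_geodesic {e : ℕ} (he : 0 < e) (u v : Fin e → ℝ)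
    (lam : ℝ)
    (hmin : (Finset.univ.inf' ⟨⟨0, he⟩, Finset.mem_univ _⟩ fun i => v i - u i) ≤ lam)
    (hmax : lam ≤ Finset.univ.sup' ⟨⟨0, he⟩, Finset.mem_univ _⟩ fun i => v i - u i)
    (z : Fin e → ℝ) (hz : z = fun i => max (lam + u i) (v i)) :
    dtr he u z + dtr he z v = dtr he u v := by
  subst hz
  have H : (Finset.univ : Finset (Fin e)).Nonempty := ⟨⟨0, he⟩, Finset.mem_univ _⟩
  obtain ⟨p, hpmem, hp⟩ := Finset.exists_mem_eq_sup' H fun i => v i - u i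
  obtain ⟨q, hqmem, hq⟩ := Finset.exists_mem_eq_inf' H fun i => v i - u i
  set M := Finset.univ.sup' H fun i => v i - u i with hM
  set m := Finset.univ.inf' H fun i => v i - u i with hm
  have hub : ∀ i : Fin e, v i - u i ≤ M := fun i => Finset.le_sup' (fun j => v j - u j) (Finset.mem_univ i)
  have hlb : ∀ i : Fin e, m ≤ v i - u i := fun i => Finset.inf'_le (fun j => v j - u j) (Finset.mem_univ i)
  -- sup_i (u i - z i) = -lam
  have hA : (Finset.univ.sup' H fun i => u i - max (lam + u i) (v i)) = -lam := by
    apply le_antisymm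
    · exact Finset.sup'_le _ _ fun i _ => by
        have := le_max_left (lam + u i) (v i); linarith
    · have hq' : max (lam + u q) (v q) = lam + u q := by
        have := hq ▸ hmin; exact max_eq_left (by linarith)
      have : -lam = u q - max (lam + u q) (v q) := by rw [hq']; ring
      rw [this]; exact Finset.le_sup' (fun i => u i - max (lam + u i) (v i)) hqmem
  -- inf_i (u i - z i) = -M
  have hB : (Finset.univ.inf' H fun i => u i - max (lam + u i) (v i)) = -M := by
    apply le_antisymm
    · have hp' : max (lam + u p) (v p) = v p := by
        have := hp ▸ hmax; exact max_eq_right (by linarith)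
      have : u p - max (lam + u p) (v p) = -M := by rw [hp']; rw [hp]; ring
      rw [← this]; exact Finset.inf'_le _ hpmem
    · exact Finset.le_inf' _ _ fun i _ => by
        have h1 := hub i
        have h2 : max (lam + u i) (v i) ≤ u i + M := max_le (by linarith) (by linarith)
        linarith
  -- sup_i (z i - v i) = lam - m
  have hC : (Finset.univ.sup' H fun i => max (lam + u i) (v i) - v i) = lam - m := by
    apply le_antisymm
    · exact Finset.sup'_le _ _ fun i _ => by
        have h1 := hlb i
        rcases le_total (lam + u i) (v i) with h | h
        · rw [max_eq_right h]; linarith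
        · rw [max_eq_left h]; linarith
    · have hq' : max (lam + u q) (v q) = lam + u q := by
        have := hq ▸ hmin; exact max_eq_left (by linarith)
      have : lam - m = max (lam + u q) (v q) - v q := by rw [hq', hq]; ring
      rw [this]; exact Finset.le_sup' (fun i => max (lam + u i) (v i) - v i) hqmem
  -- inf_i (z i - v i) = 0
  have hD : (Finset.univ.inf' H fun i => max (lam + u i) (v i) - v i) = 0 := by
    apply le_antisymm
    · have hp' : max (lam + u p) (v p) = v p := by
        have := hp ▸ hmax; exact max_eq_right (by linarith)
      have : max (lam + u p) (v p) - v p = 0 := by rw [hp']; ring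
      rw [← this]; exact Finset.inf'_le _ hpmem
    · exact Finset.le_inf' _ _ fun i _ => by
        have := le_max_right (lam + u i) (v i); linarith
  have hE : (Finset.univ.sup' H fun i => u i - v i) = -m := by
    apply le_antisymm
    · exact Finset.sup'_le _ _ fun i _ => by have := hlb i; linarith
    · have : -m = u q - v q := by rw [hq]; ring
      rw [this]; exact Finset.le_sup' (fun i => u i - v i) hqmem
  have hF : (Finset.univ.inf' H fun i => u i - v i) = -M := by
    apply le_antisymm
    · have : u p - v p = -M := by rw [hp]; ring
      rw [← this]; exact Finset.inf'_le (fun i => u i - v i) hpmem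
    · exact Finset.le_inf' _ _ fun i _ => by have := hub i; linarith
  simp only [dtr]
  linarith [hA, hB, hC, hD, hE, hF]
end

section
/- Let u, v ∈ ℝ^e, λ ∈ ℝ with min_i(v_i − u_i) ≤ λ ≤ max_i(v_i − u_i), and define z ∈ ℝ^e by z_i = max(λ + u_i, v_i). Then d_tr(u,z) = max_i(v_i − u_i) − λ and d_tr(z,v) = λ − min_i(v_i − u_i). -/
/-- for `λ` between `min_i(v_i - u_i)` and `max_i(v_i - u_i)` and
`z_i = max(λ + u_i, v_i)`, one has `d_tr(u,z) = max_i(v_i − u_i) − λ` and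
`d_tr(z,v) = λ − min_i(v_i − u_i)`. -/
theorem tropical_dist_along_segment {e : ℕ} (he : 0 < e) (u v : Fin e → ℝ)
    (lam : ℝ)
    (hmin : (Finset.univ.inf' ⟨⟨0, he⟩, Finset.mem_univ _⟩ fun i => v i - u i) ≤ lam)
    (hmax : lam ≤ Finset.univ.sup' ⟨⟨0, he⟩, Finset.mem_univ _⟩ fun i => v i - u i)
    (z : Fin e → ℝ) (hz : z = fun i => max (lam + u i) (v i)) :
    dtr he u z = (Finset.univ.sup' ⟨⟨0, he⟩, Finset.mem_univ _⟩ fun i => v i - u i) - lam ∧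
    dtr he z v = lam - (Finset.univ.inf' ⟨⟨0, he⟩, Finset.mem_univ _⟩ fun i => v i - u i) := by
  subst hz
  have hne : (Finset.univ : Finset (Fin e)).Nonempty := ⟨⟨0, he⟩, Finset.mem_univ _⟩
  set M := Finset.univ.sup' hne fun i => v i - u i with hM
  set m := Finset.univ.inf' hne fun i => v i - u i with hm
  obtain ⟨i0, -, hi0⟩ := Finset.exists_mem_eq_inf' hne fun i => v i - u i
  obtain ⟨j0, -, hj0⟩ := Finset.exists_mem_eq_sup' hne fun i => v i - u i
  have hzi0 : max (lam + u i0) (v i0) = lam + u i0 := by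
    have : v i0 - u i0 ≤ lam := hi0 ▸ hmin
    simp only [max_eq_left_iff]; linarith
  have hzj0 : max (lam + u j0) (v j0) = v j0 := by
    have : lam ≤ v j0 - u j0 := hj0 ▸ hmax
    simp only [max_eq_right_iff]; linarith
  have hMi : ∀ i, v i - u i ≤ M := fun i => Finset.le_sup' (fun j => v j - u j) (Finset.mem_univ i)
  have hmi : ∀ i, m ≤ v i - u i := fun i => Finset.inf'_le (fun j => v j - u j) (Finset.mem_univ i)
  constructor
  · have hsup : (Finset.univ.sup' hne fun i => u i - max (lam + u i) (v i)) = -lam := by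
      apply le_antisymm
      · apply Finset.sup'_le
        intro i _
        have := le_max_left (lam + u i) (v i); linarith
      · have := Finset.le_sup' (f := fun i => u i - max (lam + u i) (v i))
          (Finset.mem_univ i0)
        rw [hzi0] at this; linarith
    have hinf : (Finset.univ.inf' hne fun i => u i - max (lam + u i) (v i)) = -M := by
      apply le_antisymm
      · have := Finset.inf'_le (f := fun i => u i - max (lam + u i) (v i))
          (Finset.mem_univ j0)
        rw [hzj0] at this
        have : v j0 - u j0 = M := hj0.symm
        linarith [Finset.inf'_le (f := fun i => u i - max (lam + u i) (v i))
          (Finset.mem_univ j0), hzj0]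
      · apply Finset.le_inf'
        intro i _
        have h1 : v i - u i ≤ M := hMi i
        have h2 : lam ≤ M := hmax
        have := max_le_iff.mpr (⟨by linarith, by linarith⟩ :
          lam + u i ≤ M + u i ∧ v i ≤ M + u i)
        linarith
    simp only [dtr, hsup, hinf]; ring
  · have hsup : (Finset.univ.sup' hne fun i => max (lam + u i) (v i) - v i) = lam - m := by
      apply le_antisymm
      · apply Finset.sup'_le
        intro i _
        have h1 : m ≤ v i - u i := hmi i
        have h2 : m ≤ lam := hmin
        have := max_le_iff.mpr (⟨by linarith, by linarith⟩ :
          lam + u i ≤ lam - m + v i ∧ v i ≤ lam - m + v i)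
        linarith
      · have := Finset.le_sup' (f := fun i => max (lam + u i) (v i) - v i)
          (Finset.mem_univ i0)
        rw [hzi0] at this
        have : v i0 - u i0 = m := hi0.symm
        linarith [Finset.le_sup' (f := fun i => max (lam + u i) (v i) - v i)
          (Finset.mem_univ i0), hzi0]
    have hinf : (Finset.univ.inf' hne fun i => max (lam + u i) (v i) - v i) = 0 := by
      apply le_antisymm
      · have := Finset.inf'_le (f := fun i => max (lam + u i) (v i) - v i)
          (Finset.mem_univ j0)
        rw [hzj0] at this; linarith
      · apply Finset.le_inf'
        intro i _
        have := le_max_right (lam + u i) (v i); linarith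
    simp only [dtr, hsup, hinf]; ring
end

section
/- Fix m ≥ 3 and index the coordinates of ℝ^{\binom{m}{2}} by unordered pairs {i,j} of distinct elements of {1,…,m}. Say a vector x ∈ ℝ^{\binom{m}{2}} satisfies the three-point condition if for every triple of distinct i, j, k the maximum of {x_{ij}, x_{ik}, x_{jk}} is attained at least twice. If u and v both satisfy the three-point condition, then for all a, b ∈ ℝ the tropical linear combination w defined by w_{ij} = max(a + u_{ij}, b + v_{ij}) also satisfies the three-point condition. In particular, the set of vectors satisfying the three-point condition (the tropicalized linear space Trop(L_m), i.e., the image of the space of ultrametrics) is tropically convex. -/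
/-- The maximum of `{a, b, c}` is attained at least twice: two of the three
values are equal and are greater than or equal to the third. -/
def MaxAttainedTwice (a b c : ℝ) : Prop :=
  (a = b ∧ c ≤ a) ∨ (a = c ∧ b ≤ a) ∨ (b = c ∧ a ≤ b)

/-- The three-point condition for a vector indexed by (unordered) pairs of
elements of `{1,…,m}`, encoded as a symmetric function `Fin m → Fin m → ℝ`:
for every triple of distinct indices, the maximum of the three pairwise
coordinates is attained at least twice.  This condition cuts out the
tropicalized linear space `Trop(L_m)`, the image of the space of
ultrametrics. -/
def ThreePointCond {m : ℕ} (x : Fin m → Fin m → ℝ) : Prop :=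
  ∀ i j k : Fin m, i ≠ j → i ≠ k → j ≠ k →
    MaxAttainedTwice (x i j) (x i k) (x j k)

/-- The max of three reals is attained twice iff each one is bounded by the
max of the other two. -/
lemma mat_iff (a b c : ℝ) :
    MaxAttainedTwice a b c ↔ a ≤ max b c ∧ b ≤ max a c ∧ c ≤ max a b := by
  constructor
  · rintro (⟨rfl, hc⟩ | ⟨rfl, hb⟩ | ⟨rfl, ha⟩) <;>
      refine ⟨?_, ?_, ?_⟩ <;> simp [le_max_iff] <;> linarith
  · rintro ⟨h1, h2, h3⟩
    rcases le_total a b with hab | hab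
    · rcases le_total b c with hbc | hbc
      · right; right
        exact ⟨le_antisymm hbc (by simpa [max_eq_right hab] using h3), hab⟩
      · rcases le_total a c with hac | hac
        · right; right
          exact ⟨le_antisymm (by simpa [max_eq_right hac] using h2) hbc, hab⟩
        · left
          exact ⟨le_antisymm hab (by simpa [max_eq_left hac] using h2), hac⟩
    · rcases le_total a c with hac | hac
      · right; left
        exact ⟨le_antisymm hac (by simpa [max_eq_left hab] using h3), hab⟩
      · rcases le_total b c with hbc | hbc
        · right; left
          exact ⟨le_antisymm (by simpa [max_eq_right hbc] using h1) hac, hab⟩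
        · left
          exact ⟨le_antisymm (by simpa [max_eq_left hbc] using h1) hab, hbc.trans hab⟩

/-- `MaxAttainedTwice` is preserved under componentwise maxima. -/
lemma mat_max (a b c a' b' c' : ℝ) (h : MaxAttainedTwice a b c)
    (h' : MaxAttainedTwice a' b' c') :
    MaxAttainedTwice (max a a') (max b b') (max c c') := by
  rw [mat_iff] at *
  obtain ⟨h1, h2, h3⟩ := h
  obtain ⟨h1', h2', h3'⟩ := h'
  refine ⟨max_le ?_ ?_, max_le ?_ ?_, max_le ?_ ?_⟩
  · exact h1.trans (max_le_max (le_max_left _ _) (le_max_left _ _))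
  · exact h1'.trans (max_le_max (le_max_right _ _) (le_max_right _ _))
  · exact h2.trans (max_le_max (le_max_left _ _) (le_max_left _ _))
  · exact h2'.trans (max_le_max (le_max_right _ _) (le_max_right _ _))
  · exact h3.trans (max_le_max (le_max_left _ _) (le_max_left _ _))
  · exact h3'.trans (max_le_max (le_max_right _ _) (le_max_right _ _))

/-- `MaxAttainedTwice` is preserved under adding a constant. -/
lemma mat_add (t a b c : ℝ) (h : MaxAttainedTwice a b c) :
    MaxAttainedTwice (t + a) (t + b) (t + c) := by
  rcases h with ⟨h, hc⟩ | ⟨h, hb⟩ | ⟨h, ha⟩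
  · exact Or.inl ⟨by linarith, by linarith⟩
  · exact Or.inr (Or.inl ⟨by linarith, by linarith⟩)
  · exact Or.inr (Or.inr ⟨by linarith, by linarith⟩)

/-- if `u` and `v` satisfy the three-point condition, then so does
every tropical linear combination `w` with `w_{ij} = max(a + u_{ij}, b + v_{ij})`;
in particular `Trop(L_m)` is tropically convex. -/
theorem threePointCond_tropically_convex {m : ℕ} (hm : 3 ≤ m)
    (u v : Fin m → Fin m → ℝ)
    (hu_symm : ∀ i j, u i j = u j i) (hv_symm : ∀ i j, v i j = v j i)
    (hu : ThreePointCond u) (hv : ThreePointCond v) (a b : ℝ) :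
    ThreePointCond (fun i j => max (a + u i j) (b + v i j)) := by
  intro i j k hij hik hjk
  exact mat_max _ _ _ _ _ _ (mat_add a _ _ _ (hu i j k hij hik hjk))
    (mat_add b _ _ _ (hv i j k hij hik hjk))
end

section
/- Fix m ≥ 3. If u, v ∈ ℝ^{\binom{m}{2}} both satisfy the three-point condition (for every triple of distinct i, j, k, the maximum of {x_{ij}, x_{ik}, x_{jk}} is attained at least twice), then every point z of the tropical line segment between u and v, i.e., every z with z_{ij} = max(c₁ + u_{ij}, c₂ + v_{ij}) for some c₁, c₂ ∈ ℝ, also satisfies the three-point condition. Hence the tropical line segment between two ultrametrics is contained in the space of ultrametrics (up to adding multiples of the all-ones vector). -/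
lemma MaxAttainedTwice.shift (c : ℝ) {a b d : ℝ} (h : MaxAttainedTwice a b d) :
    MaxAttainedTwice (c + a) (c + b) (c + d) := by
  rcases h with ⟨h1, h2⟩ | ⟨h1, h2⟩ | ⟨h1, h2⟩
  · exact Or.inl ⟨by linarith, by linarith⟩
  · exact Or.inr (Or.inl ⟨by linarith, by linarith⟩)
  · exact Or.inr (Or.inr ⟨by linarith, by linarith⟩)

lemma MaxAttainedTwice.max {a b c a' b' c' : ℝ} (h : MaxAttainedTwice a b c)
    (h' : MaxAttainedTwice a' b' c') :
    MaxAttainedTwice (max a a') (max b b') (max c c') := by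
  rcases max_cases a a' with ⟨e1, l1⟩ | ⟨e1, l1⟩ <;>
  rcases max_cases b b' with ⟨e2, l2⟩ | ⟨e2, l2⟩ <;>
  rcases max_cases c c' with ⟨e3, l3⟩ | ⟨e3, l3⟩ <;>
  rw [e1, e2, e3] <;>
  rcases h with ⟨h1, h2⟩ | ⟨h1, h2⟩ | ⟨h1, h2⟩ <;>
  rcases h' with ⟨h1', h2'⟩ | ⟨h1', h2'⟩ | ⟨h1', h2'⟩ <;>
  first
    | exact Or.inl ⟨by linarith, by linarith⟩
    | exact Or.inr (Or.inl ⟨by linarith, by linarith⟩)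
    | exact Or.inr (Or.inr ⟨by linarith, by linarith⟩)

/-- if `u` and `v` satisfy the three-point condition, then every
point `z` of the tropical line segment between them, i.e., every
`z_{ij} = max(c₁ + u_{ij}, c₂ + v_{ij})` with `c₁, c₂ ∈ ℝ`, also satisfies the
three-point condition.  Hence the tropical line segment between two
ultrametrics stays in the space of ultrametrics (up to adding multiples of
the all-ones vector). -/
theorem tropical_segment_of_ultrametrics {m : ℕ} (hm : 3 ≤ m)
    (u v : Fin m → Fin m → ℝ)
    (hu_symm : ∀ i j, u i j = u j i) (hv_symm : ∀ i j, v i j = v j i)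
    (hu : ThreePointCond u) (hv : ThreePointCond v)
    (c₁ c₂ : ℝ) (z : Fin m → Fin m → ℝ)
    (hz : z = fun i j => max (c₁ + u i j) (c₂ + v i j)) :
    ThreePointCond z := by
  intro i j k hij hik hjk
  subst hz
  exact ((hu i j k hij hik hjk).shift c₁).max ((hv i j k hij hik hjk).shift c₂)
end
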